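/- Let a and b be positive integers with a ≤ b. Define f(i,j) = (a−b)/2 + j − i for (i,j) ∈ {1,…,a}×{1,…,b}, g(j) = j − (b+1)/2, and c[t] = 12t(t−1) + 2 for t ∈ ℚ. Then Σ_{(i,j): f(i,j)>0} c[f(i,j)] − (1/2)·Σ_{(i,j): f(i,j)=1/2} c[f(i,j)] = Σ_{(i,j): g(j)>0} c[f(i,j)] − (1/2)·Σ_{(i,j): g(j)=1/2} c[f(i,j)], where all sums range over (i,j) ∈ {1,…,a}×{1,…,b}. -/

import Mathlib

open Finset

/-- `SCval e n = ∑_{j=1}^n (12(e+j)(e+j-1)+2)`. -/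
def SCval (e : ℚ) (n : ℕ) : ℚ :=
  4*(n:ℚ)^3 - 2*(n:ℚ) + 12*e*(n:ℚ)*((n:ℚ)+e)

lemma sumSC (e : ℚ) : ∀ n : ℕ,
    (∑ j ∈ Finset.Ioc 0 n, (12*(e+(j:ℚ))*(e+(j:ℚ)-1)+2)) = SCval e n := by
  intro n
  induction n with
  | zero => simp [SCval]
  | succ m ih =>
    rw [Finset.sum_Ioc_succ_top (Nat.zero_le m), ih]
    simp only [SCval]
    push_cast
    ring

lemma sum_Ioc_c (e : ℚ) (l n : ℕ) (h : l ≤ n) (F : ℕ → ℚ)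
    (hF : ∀ j : ℕ, F j = 12*(e+(j:ℚ))*(e+(j:ℚ)-1)+2) :
    (∑ j ∈ Finset.Ioc l n, F j) = SCval e n - SCval e l := by
  have h3 : ∀ m : ℕ, (∑ j ∈ Finset.Ioc 0 m, F j) = SCval e m := by
    intro m
    rw [show F = fun j : ℕ => 12*(e+(j:ℚ))*(e+(j:ℚ)-1)+2 from funext hF]
    exact sumSC e m
  have h2 := Finset.sum_Ioc_consecutive F (Nat.zero_le l) h
  rw [h3 l, h3 n] at h2
  linarith

lemma sum_cubic (p q r s : ℚ) : ∀ (n : ℕ) (F : ℕ → ℚ),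
    (∀ i ∈ Finset.Icc 1 n, F i = p + q*(i:ℚ) + r*(i:ℚ)^2 + s*(i:ℚ)^3) →
    (∑ i ∈ Finset.Icc 1 n, F i)
      = p*(n:ℚ) + q*((n:ℚ)*((n:ℚ)+1)/2) + r*((n:ℚ)*((n:ℚ)+1)*(2*(n:ℚ)+1)/6)
        + s*((n:ℚ)*((n:ℚ)+1)/2)^2 := by
  intro n
  induction n with
  | zero => intro F _; norm_num
  | succ m ih =>
    intro F hF
    rw [Finset.sum_Icc_succ_top (by omega : 1 ≤ m + 1) F,
      ih F (fun i hi => hF i (by simp only [Finset.mem_Icc] at hi ⊢; omega)),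
      hF (m+1) (by simp only [Finset.mem_Icc]; omega)]
    push_cast
    ring

set_option maxHeartbeats 2000000 in
/-- Equality of ghost central charges for a single `a × b` block (`a ≤ b`),
where `f(i,j) = (a-b)/2 + j - i`, `g(j) = j - (b+1)/2` and `c[t] = 12t(t-1) + 2`. -/
theorem block_central_charge_identity (a b : ℕ) (ha : 0 < a) (hb : 0 < b) (hab : a ≤ b)
    (f : ℕ × ℕ → ℚ) (hf : ∀ p, f p = ((a : ℚ) - (b : ℚ)) / 2 + (p.2 : ℚ) - (p.1 : ℚ))
    (g : ℕ → ℚ) (hg : ∀ j, g j = (j : ℚ) - ((b : ℚ) + 1) / 2)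
    (c : ℚ → ℚ) (hc : ∀ t, c t = 12 * t * (t - 1) + 2) :
    (∑ p ∈ (Finset.Icc 1 a ×ˢ Finset.Icc 1 b).filter (fun p => 0 < f p), c (f p))
      - (1/2) * ∑ p ∈ (Finset.Icc 1 a ×ˢ Finset.Icc 1 b).filter (fun p => f p = 1/2), c (f p)
    = (∑ p ∈ (Finset.Icc 1 a ×ˢ Finset.Icc 1 b).filter (fun p => 0 < g p.2), c (f p))
      - (1/2) * ∑ p ∈ (Finset.Icc 1 a ×ˢ Finset.Icc 1 b).filter (fun p => g p.2 = 1/2), c (f p) := by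
  -- abbreviations (as plain terms)
  -- U = ((b-a)/2 : ℕ) cast to ℚ, V = ((b+1)/2 : ℕ) cast to ℚ
  -- Sum 1 : f p > 0
  have E1 : (∑ p ∈ (Finset.Icc 1 a ×ˢ Finset.Icc 1 b).filter (fun p => 0 < f p), c (f p))
      = (2*(((b-a)/2 : ℕ):ℚ) - 4*(((b-a)/2 : ℕ):ℚ)^3 - 2*(b:ℚ) + 6*(b:ℚ)*(((b-a)/2 : ℕ):ℚ)^2
          - 3*(b:ℚ)^2*(((b-a)/2 : ℕ):ℚ) + (b:ℚ)^3 - 6*(a:ℚ)*(((b-a)/2 : ℕ):ℚ)^2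
          + 6*(a:ℚ)*(b:ℚ)*(((b-a)/2 : ℕ):ℚ) - 3*(a:ℚ)^2*(((b-a)/2 : ℕ):ℚ) + 3*(a:ℚ)^2*(b:ℚ))*(a:ℚ)
        + (2 - 3*(b:ℚ)^2 - 6*(a:ℚ)*(b:ℚ) - 3*(a:ℚ)^2)*((a:ℚ)*((a:ℚ)+1)/2)
        + (6*(b:ℚ) + 6*(a:ℚ))*((a:ℚ)*((a:ℚ)+1)*(2*(a:ℚ)+1)/6)
        + (-4)*((a:ℚ)*((a:ℚ)+1)/2)^2 := by
    rw [Finset.sum_filter, Finset.sum_product]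
    refine Eq.trans (Finset.sum_congr rfl fun i hi => ?_)
      (sum_cubic _ _ _ _ a (fun i => ∑ j ∈ Finset.Ioc (i + (b-a)/2) b, c (f (i, j)))
        (fun i hi => ?_))
    · -- inner: if-sum = Ioc-sum
      simp only [Finset.mem_Icc] at hi
      have hfe : (Finset.Icc 1 b).filter (fun j => 0 < f (i, j)) = Finset.Ioc (i + (b-a)/2) b := by
        ext j
        simp only [Finset.mem_filter, Finset.mem_Icc, Finset.mem_Ioc]
        constructor
        · rintro ⟨⟨h1, h2⟩, h3⟩
          rw [hf] at h3
          have hq : (b:ℚ) + 2*(i:ℚ) < (a:ℚ) + 2*(j:ℚ) := by push_cast at h3 ⊢; linarith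
          have hn : b + 2*i < a + 2*j := by exact_mod_cast hq
          omega
        · rintro ⟨h1, h2⟩
          have hn : b + 2*i < a + 2*j := by omega
          have hq : (b:ℚ) + 2*(i:ℚ) < (a:ℚ) + 2*(j:ℚ) := by exact_mod_cast hn
          exact ⟨⟨by omega, h2⟩, by rw [hf]; push_cast; linarith⟩
      rw [← Finset.sum_filter, hfe]
    · -- closed form of the inner sum
      simp only [Finset.mem_Icc] at hi
      rw [sum_Ioc_c (((a:ℚ)-(b:ℚ))/2 - (i:ℚ)) _ b (by omega) _
        (fun j => by rw [hc, hf]; push_cast; ring)]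
      simp only [SCval]
      push_cast
      ring
  -- Sum 3 : g p.2 > 0
  have E3 : (∑ p ∈ (Finset.Icc 1 a ×ˢ Finset.Icc 1 b).filter (fun p => 0 < g p.2), c (f p))
      = (2*(((b+1)/2 : ℕ):ℚ) - 4*(((b+1)/2 : ℕ):ℚ)^3 - 2*(b:ℚ) + 6*(b:ℚ)*(((b+1)/2 : ℕ):ℚ)^2
          - 3*(b:ℚ)^2*(((b+1)/2 : ℕ):ℚ) + (b:ℚ)^3 - 6*(a:ℚ)*(((b+1)/2 : ℕ):ℚ)^2
          + 6*(a:ℚ)*(b:ℚ)*(((b+1)/2 : ℕ):ℚ) - 3*(a:ℚ)^2*(((b+1)/2 : ℕ):ℚ) + 3*(a:ℚ)^2*(b:ℚ))*(a:ℚ)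
        + (12*(((b+1)/2 : ℕ):ℚ)^2 - 12*(b:ℚ)*(((b+1)/2 : ℕ):ℚ) + 12*(a:ℚ)*(((b+1)/2 : ℕ):ℚ)
          - 12*(a:ℚ)*(b:ℚ))*((a:ℚ)*((a:ℚ)+1)/2)
        + (-12*(((b+1)/2 : ℕ):ℚ) + 12*(b:ℚ))*((a:ℚ)*((a:ℚ)+1)*(2*(a:ℚ)+1)/6)
        + 0*((a:ℚ)*((a:ℚ)+1)/2)^2 := by
    rw [Finset.sum_filter, Finset.sum_product]
    refine Eq.trans (Finset.sum_congr rfl fun i hi => ?_)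
      (sum_cubic _ _ _ _ a (fun i => ∑ j ∈ Finset.Ioc ((b+1)/2) b, c (f (i, j)))
        (fun i hi => ?_))
    · have hfe : (Finset.Icc 1 b).filter (fun j => 0 < g j) = Finset.Ioc ((b+1)/2) b := by
        ext j
        simp only [Finset.mem_filter, Finset.mem_Icc, Finset.mem_Ioc]
        constructor
        · rintro ⟨⟨h1, h2⟩, h3⟩
          rw [hg] at h3
          have hq : (b:ℚ) + 1 < 2*(j:ℚ) := by linarith
          have hn : b + 1 < 2*j := by exact_mod_cast hq
          omega
        · rintro ⟨h1, h2⟩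
          have hn : b + 1 < 2*j := by omega
          have hq : (b:ℚ) + 1 < 2*(j:ℚ) := by exact_mod_cast hn
          exact ⟨⟨by omega, h2⟩, by rw [hg]; linarith⟩
      rw [← Finset.sum_filter, hfe]
    · rw [sum_Ioc_c (((a:ℚ)-(b:ℚ))/2 - (i:ℚ)) _ b (by omega) _
        (fun j => by rw [hc, hf]; push_cast; ring)]
      simp only [SCval]
      push_cast
      ring
  -- Sum 2 : f p = 1/2 (depends on parity of b - a)
  have E2odd : (b - a) % 2 = 1 →
      (∑ p ∈ (Finset.Icc 1 a ×ˢ Finset.Icc 1 b).filter (fun p => f p = 1/2), c (f p))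
        = -(a:ℚ) := by
    intro hd
    rw [Finset.sum_filter, Finset.sum_product]
    have key : ∀ i ∈ Finset.Icc 1 a,
        (∑ j ∈ Finset.Icc 1 b, if f (i, j) = 1/2 then c (f (i, j)) else 0) = -1 := by
      intro i hi
      simp only [Finset.mem_Icc] at hi
      have hfe : (Finset.Icc 1 b).filter (fun j => f (i, j) = 1/2)
          = {i + (b - a + 1)/2} := by
        ext j
        simp only [Finset.mem_filter, Finset.mem_Icc, Finset.mem_singleton]
        constructor
        · rintro ⟨⟨h1, h2⟩, h3⟩
          rw [hf] at h3
          have hq : (a:ℚ) + 2*(j:ℚ) = (b:ℚ) + 2*(i:ℚ) + 1 := by push_cast at h3 ⊢; linarith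
          have hn : a + 2*j = b + 2*i + 1 := by exact_mod_cast hq
          omega
        · rintro rfl
          have hn : a + 2*(i + (b - a + 1)/2) = b + 2*i + 1 := by omega
          have hq : (a:ℚ) + 2*((i:ℚ) + (((b - a + 1)/2 : ℕ):ℚ)) = (b:ℚ) + 2*(i:ℚ) + 1 := by
            exact_mod_cast hn
          refine ⟨⟨by omega, by omega⟩, by rw [hf]; push_cast; linarith⟩
      rw [← Finset.sum_filter, hfe, Finset.sum_singleton]
      have hval : f (i, i + (b - a + 1)/2) = 1/2 := by
        have hn : a + 2*(i + (b - a + 1)/2) = b + 2*i + 1 := by omega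
        have hq : (a:ℚ) + 2*((i:ℚ) + (((b - a + 1)/2 : ℕ):ℚ)) = (b:ℚ) + 2*(i:ℚ) + 1 := by
          exact_mod_cast hn
        rw [hf]; push_cast; linarith
      rw [hval, hc]
      norm_num
    rw [Finset.sum_congr rfl key, Finset.sum_const, Nat.card_Icc]
    simp
  have E2even : (b - a) % 2 = 0 →
      (∑ p ∈ (Finset.Icc 1 a ×ˢ Finset.Icc 1 b).filter (fun p => f p = 1/2), c (f p))
        = 0 := by
    intro hd
    rw [Finset.filter_false_of_mem, Finset.sum_empty]
    intro p hp heq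
    simp only [Finset.mem_product, Finset.mem_Icc] at hp
    rw [hf] at heq
    have hq : (a:ℚ) + 2*(p.2:ℚ) = (b:ℚ) + 2*(p.1:ℚ) + 1 := by push_cast at heq ⊢; linarith
    have hn : a + 2*p.2 = b + 2*p.1 + 1 := by exact_mod_cast hq
    omega
  -- Sum 4 : g p.2 = 1/2 (depends on parity of b)
  have E4odd : b % 2 = 1 →
      (∑ p ∈ (Finset.Icc 1 a ×ˢ Finset.Icc 1 b).filter (fun p => g p.2 = 1/2), c (f p))
        = 0 := by
    intro hbp
    rw [Finset.filter_false_of_mem, Finset.sum_empty]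
    intro p hp heq
    simp only [Finset.mem_product, Finset.mem_Icc] at hp
    rw [hg] at heq
    have hq : 2*(p.2:ℚ) = (b:ℚ) + 2 := by linarith
    have hn : 2*p.2 = b + 2 := by exact_mod_cast hq
    omega
  have E4even : b % 2 = 0 →
      (∑ p ∈ (Finset.Icc 1 a ×ˢ Finset.Icc 1 b).filter (fun p => g p.2 = 1/2), c (f p))
        = (3*(a:ℚ)^2 + 6*(a:ℚ) + 2)*(a:ℚ) + (-12*(a:ℚ) - 12)*((a:ℚ)*((a:ℚ)+1)/2)
          + 12*((a:ℚ)*((a:ℚ)+1)*(2*(a:ℚ)+1)/6) + 0*((a:ℚ)*((a:ℚ)+1)/2)^2 := by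
    intro hbp
    have hM : ((b/2 : ℕ):ℚ) = (b:ℚ)/2 := by
      have h1 : 2*(b/2) = b := by omega
      have h2 : 2*((b/2 : ℕ):ℚ) = (b:ℚ) := by exact_mod_cast h1
      linarith
    rw [Finset.sum_filter, Finset.sum_product]
    refine Eq.trans (Finset.sum_congr rfl fun i hi => ?_)
      (sum_cubic _ _ _ _ a (fun i => c (f (i, b/2 + 1))) (fun i hi => ?_))
    · have hfe : (Finset.Icc 1 b).filter (fun j => g j = 1/2) = {b/2 + 1} := by
        ext j
        simp only [Finset.mem_filter, Finset.mem_Icc, Finset.mem_singleton]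
        constructor
        · rintro ⟨⟨h1, h2⟩, h3⟩
          rw [hg] at h3
          have hq : 2*(j:ℚ) = (b:ℚ) + 2 := by linarith
          have hn : 2*j = b + 2 := by exact_mod_cast hq
          omega
        · rintro rfl
          have hn : 2*(b/2 + 1) = b + 2 := by omega
          have hq : 2*(((b/2 + 1 : ℕ)):ℚ) = (b:ℚ) + 2 := by exact_mod_cast hn
          refine ⟨⟨by omega, by omega⟩, by rw [hg]; push_cast at hq ⊢; linarith⟩
      rw [← Finset.sum_filter, hfe, Finset.sum_singleton]
    · rw [hc, hf]
      push_cast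
      rw [hM]
      ring
  -- now case on parities
  rcases Nat.even_or_odd (b - a) with hd | hd
  · obtain ⟨k, hk⟩ := hd
    have hU : (((b - a)/2 : ℕ):ℚ) = ((b:ℚ) - (a:ℚ))/2 := by
      have h1 : (b - a)/2 = k := by omega
      have h2 : b = a + 2*k := by omega
      have h3 : (b:ℚ) = (a:ℚ) + 2*(k:ℚ) := by exact_mod_cast h2
      rw [h1, h3]; ring
    rcases Nat.even_or_odd b with hbp | hbp
    · obtain ⟨m, hm⟩ := hbp
      have hV : (((b + 1)/2 : ℕ):ℚ) = (b:ℚ)/2 := by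
        have h1 : (b + 1)/2 = m := by omega
        have h3 : (b:ℚ) = 2*(m:ℚ) := by exact_mod_cast (by omega : b = 2*m)
        rw [h1, h3]; ring
      rw [E1, E2even (by omega), E3, E4even (by omega), hU, hV]
      ring
    · obtain ⟨m, hm⟩ := hbp
      have hV : (((b + 1)/2 : ℕ):ℚ) = ((b:ℚ) + 1)/2 := by
        have h1 : (b + 1)/2 = m + 1 := by omega
        have h3 : (b:ℚ) = 2*(m:ℚ) + 1 := by exact_mod_cast hm
        rw [h1, h3]; push_cast; ring
      rw [E1, E2even (by omega), E3, E4odd (by omega), hU, hV]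
      ring
  · obtain ⟨k, hk⟩ := hd
    have hU : (((b - a)/2 : ℕ):ℚ) = ((b:ℚ) - (a:ℚ) - 1)/2 := by
      have h1 : (b - a)/2 = k := by omega
      have h2 : b = a + 2*k + 1 := by omega
      have h3 : (b:ℚ) = (a:ℚ) + 2*(k:ℚ) + 1 := by exact_mod_cast h2
      rw [h1, h3]; ring
    rcases Nat.even_or_odd b with hbp | hbp
    · obtain ⟨m, hm⟩ := hbp
      have hV : (((b + 1)/2 : ℕ):ℚ) = (b:ℚ)/2 := by
        have h1 : (b + 1)/2 = m := by omega
        have h3 : (b:ℚ) = 2*(m:ℚ) := by exact_mod_cast (by omega : b = 2*m)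
        rw [h1, h3]; ring
      rw [E1, E2odd (by omega), E3, E4even (by omega), hU, hV]
      ring
    · obtain ⟨m, hm⟩ := hbp
      have hV : (((b + 1)/2 : ℕ):ℚ) = ((b:ℚ) + 1)/2 := by
        have h1 : (b + 1)/2 = m + 1 := by omega
        have h3 : (b:ℚ) = 2*(m:ℚ) + 1 := by exact_mod_cast hm
        rw [h1, h3]; push_cast; ring
      rw [E1, E2odd (by omega), E3, E4odd (by omega), hU, hV]
      ring
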